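/- Let γ = [[A,B],[C,D]] ∈ Sp₄(ℝ) in 2×2 blocks, let T ∈ M₂(ℂ) be symmetric and u ∈ ℂ² a column vector, with φ = ᵗu·(Im T)·u ≠ 0. Set Z = conj(T) + (2i/φ)·(Im T)·u·ᵗu·(Im T). Assume C·T + D, C·conj(T) + D, and C·Z + D are invertible. Then ᵗu·(Im T)·(C·conj(T)+D)⁻¹·(C·T+D)·u / (ᵗu·(Im T)·u) = det(C·Z + D) / det(C·conj(T) + D). -/

import Mathlib

open Matrix

/-- Coerce a real `2×2` matrix to a complex one. -/
def matC (A : Matrix (Fin 2) (Fin 2) ℝ) : Matrix (Fin 2) (Fin 2) ℂ :=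
  A.map (fun x => (x : ℂ))

/-- The entrywise imaginary part of a complex matrix. -/
def imMat (T : Matrix (Fin 2) (Fin 2) ℂ) : Matrix (Fin 2) (Fin 2) ℝ :=
  T.map Complex.im

/-- The standard symplectic form matrix `J = [[0, -E], [E, 0]]` in `2×2` blocks, over `ℝ`. -/
def J2R : Matrix (Fin 2 ⊕ Fin 2) (Fin 2 ⊕ Fin 2) ℝ :=
  Matrix.fromBlocks 0 (-1) 1 0

/-- The non-holomorphic modification `Z = conj(T) + (2i/φ)·(Im T)·u·ᵗu·(Im T)` of the period
matrix `T` introduced by Klemm et al., where `φ = ᵗu·(Im T)·u`. -/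
noncomputable def KZ (T : Matrix (Fin 2) (Fin 2) ℂ) (u : Fin 2 → ℂ) :
    Matrix (Fin 2) (Fin 2) ℂ :=
  T.map (starRingEnd ℂ) +
    (2 * Complex.I / dotProduct u ((matC (imMat T)).mulVec u)) •
      Matrix.vecMulVec ((matC (imMat T)).mulVec u) (Matrix.vecMul u (matC (imMat T)))

/-- For `γ = [[A,B],[C,D]] ∈ Sp₄(ℝ)`, `T` symmetric, `u ∈ ℂ²` with `φ = ᵗu·(Im T)·u ≠ 0`:
`ᵗu·(Im T)·(C·conj T + D)⁻¹·(C·T + D)·u / (ᵗu·(Im T)·u) = det(C·Z + D)/det(C·conj T + D)`,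
where `Z` is the Klemm et al. non-holomorphic modification of `T`. -/
theorem phi_transformation_determinant_identity
    (A B C D : Matrix (Fin 2) (Fin 2) ℝ)
    (hsp : (Matrix.fromBlocks A B C D)ᵀ * J2R * Matrix.fromBlocks A B C D = J2R)
    (T : Matrix (Fin 2) (Fin 2) ℂ) (hT : Tᵀ = T) (u : Fin 2 → ℂ)
    (hφ : dotProduct u ((matC (imMat T)).mulVec u) ≠ 0)
    (h1 : IsUnit (matC C * T + matC D))
    (h2 : IsUnit (matC C * T.map (starRingEnd ℂ) + matC D))
    (h3 : IsUnit (matC C * KZ T u + matC D)) :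
    dotProduct u
        ((matC (imMat T) * (matC C * T.map (starRingEnd ℂ) + matC D)⁻¹ *
          (matC C * T + matC D)).mulVec u) /
      dotProduct u ((matC (imMat T)).mulVec u)
    = (matC C * KZ T u + matC D).det / (matC C * T.map (starRingEnd ℂ) + matC D).det := by
  set S : Matrix (Fin 2) (Fin 2) ℂ := matC (imMat T) with hS
  set M : Matrix (Fin 2) (Fin 2) ℂ := matC C * T.map (starRingEnd ℂ) + matC D with hM
  set φ : ℂ := dotProduct u (S.mulVec u) with hphi
  have hdet : IsUnit M.det := (Matrix.isUnit_iff_isUnit_det M).mp h2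
  have hdet0 : M.det ≠ 0 := hdet.ne_zero
  -- T = conj T + 2i • Im T
  have hTsplit : T = T.map (starRingEnd ℂ) + (2 * Complex.I) • S := by
    ext i j
    simp only [Matrix.add_apply, Matrix.smul_apply, Matrix.map_apply, hS, matC, imMat,
      smul_eq_mul]
    rw [Complex.ext_iff]
    simp [Complex.conj_re, Complex.conj_im]
    ring
  set x : ℂ := dotProduct u ((S * M⁻¹ * (matC C * S)).mulVec u) with hx
  -- LHS numerator
  have hN : matC C * T + matC D = M + (2 * Complex.I) • (matC C * S) := by
    rw [hM]
    nth_rewrite 1 [hTsplit]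
    rw [Matrix.mul_add, mul_smul_comm]
    exact add_right_comm _ _ _
  have hnum : dotProduct u ((S * M⁻¹ * (matC C * T + matC D)).mulVec u)
      = φ + 2 * Complex.I * x := by
    rw [hN, Matrix.mul_add, mul_smul_comm, Matrix.mul_assoc S M⁻¹ M,
      Matrix.nonsing_inv_mul M hdet, Matrix.mul_one, Matrix.add_mulVec,
      Matrix.smul_mulVec, dotProduct_add, dotProduct_smul]
    simp [hphi, hx, smul_eq_mul]
  -- RHS determinant
  have hZ : matC C * KZ T u + matC D
      = M + Matrix.replicateCol (Fin 1) ((2 * Complex.I / φ) • ((matC C * S).mulVec u))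
          * Matrix.replicateRow (Fin 1) (Matrix.vecMul u S) := by
    rw [KZ, ← hS, ← hphi]
    rw [Matrix.mul_add, Matrix.vecMulVec_eq (Fin 1), add_right_comm, ← hM,
      mul_smul_comm, ← Matrix.mul_assoc, ← Matrix.replicateCol_mulVec,
      Matrix.mulVec_mulVec, Matrix.replicateCol_smul, Matrix.smul_mul]
    rfl
  have hdetZ : (matC C * KZ T u + matC D).det = M.det * (1 + (2 * Complex.I / φ) * x) := by
    rw [hZ, Matrix.det_add_mul _ _ hdet]
    congr 1
    rw [Matrix.det_fin_one]
    simp only [Matrix.add_apply, Matrix.one_apply_eq]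
    congr 1
    rw [Matrix.mul_assoc, ← Matrix.replicateCol_mulVec, Matrix.replicateRow_mul_replicateCol_apply,
      Matrix.mulVec_smul, dotProduct_smul, smul_eq_mul]
    congr 1
    simp only [dotProduct_mulVec, Matrix.vecMul_vecMul, Matrix.mul_assoc, hx]
  rw [hnum, hdetZ]
  field_simp
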